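/- Let R₀ = (1-√(1-4z))/2 and for k ≥ 1 let R_k = (1-z)z^{k-2}R₀³/(1 + z^{k-2}R₀³). Then R_k satisfies R_k = z·R_{k-1}/(1 - R_{k-1}) for all k ≥ 2. -/

import Mathlib

/-- With `R₀ = (1-√(1-4z))/2` and `R k = (1-z)·z^(k-2)·R₀³/(1 + z^(k-2)·R₀³)` for `k ≥ 1`,
the recurrence `R k = z·R (k-1)/(1 - R (k-1))` holds for all `k ≥ 2`. -/
theorem protected_tree_gf_recurrence (z : ℝ) (hz0 : 0 < |z|) (hz : |z| < 1 / 4) :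
    ∀ k : ℕ, 2 ≤ k →
      (fun k : ℕ =>
          (1 - z) * z ^ ((k : ℤ) - 2) * ((1 - Real.sqrt (1 - 4 * z)) / 2) ^ 3 /
            (1 + z ^ ((k : ℤ) - 2) * ((1 - Real.sqrt (1 - 4 * z)) / 2) ^ 3)) k =
        z * (fun k : ℕ =>
          (1 - z) * z ^ ((k : ℤ) - 2) * ((1 - Real.sqrt (1 - 4 * z)) / 2) ^ 3 /
            (1 + z ^ ((k : ℤ) - 2) * ((1 - Real.sqrt (1 - 4 * z)) / 2) ^ 3)) (k - 1) /
          (1 - (fun k : ℕ =>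
          (1 - z) * z ^ ((k : ℤ) - 2) * ((1 - Real.sqrt (1 - 4 * z)) / 2) ^ 3 /
            (1 + z ^ ((k : ℤ) - 2) * ((1 - Real.sqrt (1 - 4 * z)) / 2) ^ 3)) (k - 1)) := by
  intro k hk
  have hzne : z ≠ 0 := fun h => by simp [h] at hz0
  have hz4 : (0:ℝ) < 1 - 4 * z := by
    have h := abs_lt.mp hz; linarith [h.2]
  set s := Real.sqrt (1 - 4 * z) with hs
  have hs0 : 0 < s := Real.sqrt_pos.mpr hz4
  have hs2 : s ^ 2 = 1 - 4 * z := Real.sq_sqrt hz4.le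
  set r := (1 - s) / 2 with hr
  have h1 : r * (1 + s) = 2 * z := by rw [hr]; nlinarith
  have hrabs : |r| < 2 * |z| := by
    have h2 : |r| * (1 + s) = 2 * |z| := by
      have := congrArg abs h1
      rwa [abs_mul, abs_of_pos (by linarith : (0:ℝ) < 1 + s), abs_mul,
        abs_two] at this
    nlinarith [abs_nonneg r, hz0]
  have key : ∀ m : ℤ, -1 ≤ m → |z ^ m * r ^ 3| < 1 := by
    intro m hm
    have habsz : |z ^ m| = |z| ^ m := by
      rcases m with n | n
      · simp [abs_pow]
      · simp [zpow_negSucc, abs_inv, abs_pow]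
    rw [abs_mul, habsz, abs_pow]
    have hr3 : |r| ^ 3 < (2 * |z|) ^ 3 :=
      pow_lt_pow_left₀ hrabs (abs_nonneg r) (by norm_num)
    have hz3 : |z| ^ 3 < (1 / 4) ^ 3 :=
      pow_lt_pow_left₀ hz (abs_nonneg z) (by norm_num)
    rcases eq_or_lt_of_le hm with h | h
    · rw [← h, zpow_neg, zpow_one]
      rw [inv_mul_eq_div, div_lt_one hz0]
      have hzsq : |z| ^ 2 < 1 / 16 := by nlinarith
      have hmul : |z| ^ 2 * |z| < (1 / 16) * |z| :=
        mul_lt_mul_of_pos_right hzsq hz0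
      nlinarith
    · have hm0 : 0 ≤ m := by omega
      lift m to ℕ using hm0
      rw [zpow_natCast]
      have h3 : |z| ^ m ≤ 1 := pow_le_one₀ (abs_nonneg z) (by linarith)
      have h4 : |r| ^ 3 < 1 := by nlinarith
      nlinarith [pow_nonneg (abs_nonneg z) m, pow_nonneg (abs_nonneg r) 3]
  have hek : ((k - 1 : ℕ) : ℤ) - 2 = (k : ℤ) - 3 := by omega
  simp only [hek]
  have ha : 1 + z ^ ((k:ℤ) - 3) * r ^ 3 ≠ 0 := by
    have := key ((k:ℤ) - 3) (by omega)
    have := abs_lt.mp this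
    intro h; linarith [this.1]
  have hb : 1 + z ^ ((k:ℤ) - 2) * r ^ 3 ≠ 0 := by
    have := key ((k:ℤ) - 2) (by omega)
    have := abs_lt.mp this
    intro h; linarith [this.1]
  have hsplit : z ^ ((k:ℤ) - 2) = z * z ^ ((k:ℤ) - 3) := by
    rw [show (k:ℤ) - 2 = 1 + ((k:ℤ) - 3) by ring, zpow_add₀ hzne, zpow_one]
  have hd : 1 - (1 - z) * z ^ ((k:ℤ) - 3) * r ^ 3 / (1 + z ^ ((k:ℤ) - 3) * r ^ 3)
      = (1 + z ^ ((k:ℤ) - 2) * r ^ 3) / (1 + z ^ ((k:ℤ) - 3) * r ^ 3) := by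
    field_simp
    rw [hsplit]; ring
  rw [hd, hsplit]
  field_simp
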